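/- Let B be a right closed bicategory. A 1-cell M : A ⇸ B is right dualizable if and only if the canonical map μ : M ⊙ (M ▷ U_B) → M ▷ M, adjoint to the composite M ⊙ (M ▷ U_B) ⊙ M → M ⊙ U_B ≅ M (where the first map uses the counit of the ((−) ⊙ M, M ▷ (−)) adjunction), is an isomorphism. -/
import Mathlib


/-!
STATEMENT: A bicategory `B` is *right closed* if composition of 1-cells has a right adjoint:
for 1-cells `N : b ⟶ c`, `P : a ⟶ c` there is a 1-cell `N ▷ P := rhom N P : a ⟶ b` with a
couniversal evaluation 2-cell `ev N P : rhom N P ≫ N ⟶ P`, i.e. every 2-cell `X ≫ N ⟶ P`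
factors uniquely as `β ▷ N ≫ ev N P` for a unique `β : X ⟶ rhom N P`; this encodes the natural
bijection `B(X ≫ N, P) ≅ B(X, N ▷ P)`.

A 1-cell `M : a ⟶ b` is right dualizable iff the canonical map
`μ : M ≫ (M ▷ 𝟙 b) ⟶ M ▷ M`, adjoint to the composite
`(M ≫ (M ▷ 𝟙 b)) ≫ M ⟶ M ≫ 𝟙 b ≫ M` (using the counit `ev`), is an isomorphism.
-/

open CategoryTheory Bicategory

universe w v u

/-- A right closed structure on a bicategory. -/
structure RightClosedStruct (B : Type u) [Bicategory.{w, v} B] where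
  /-- The right internal hom `N ▷ P` of 1-cells. -/
  rhom : ∀ {a b c : B}, (b ⟶ c) → (a ⟶ c) → (a ⟶ b)
  /-- The evaluation (counit) 2-cell of the `((−) ≫ N, N ▷ (−))` adjunction. -/
  ev : ∀ {a b c : B} (N : b ⟶ c) (P : a ⟶ c), rhom N P ≫ N ⟶ P
  /-- The couniversal property giving the bijection `B(X ≫ N, P) ≅ B(X, N ▷ P)`. -/
  homEquiv : ∀ {a b c : B} (N : b ⟶ c) (P : a ⟶ c) (X : a ⟶ b) (α : X ≫ N ⟶ P),
    ∃! β : X ⟶ rhom N P, β ▷ N ≫ ev N P = α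

/-- Two 2-cells into a right hom object with the same mate agree. -/
theorem RightClosedStruct.ev_uniq {B : Type u} [Bicategory.{w, v} B]
    (C : RightClosedStruct B) {a b c : B} (N : b ⟶ c) (P : a ⟶ c) {X : a ⟶ b}
    (β₁ β₂ : X ⟶ C.rhom N P) (h : β₁ ▷ N ≫ C.ev N P = β₂ ▷ N ≫ C.ev N P) :
    β₁ = β₂ := by
  obtain ⟨β, hβ, hu⟩ := C.homEquiv N P X (β₂ ▷ N ≫ C.ev N P)
  rw [hu β₁ h, hu β₂ rfl]

/-- In a right closed bicategory, `M` is right dualizable iff the canonical 2-cell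
`μ : M ≫ (M ▷ 𝟙 b) ⟶ M ▷ M` is invertible. -/
theorem rightDualizable_iff_isIso_mu {B : Type u} [Bicategory.{w, v} B]
    (C : RightClosedStruct B) {a b : B} (M : a ⟶ b)
    (μ : M ≫ C.rhom M (𝟙 b) ⟶ C.rhom M M)
    (hμ : μ ▷ M ≫ C.ev M M =
      (α_ M (C.rhom M (𝟙 b)) M).hom ≫ M ◁ C.ev M (𝟙 b) ≫ (ρ_ M).hom) :
    (∃ N : b ⟶ a, Nonempty (Bicategory.Adjunction M N)) ↔ IsIso μ := by
  constructor
  · rintro ⟨N', ⟨adj⟩⟩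
    obtain ⟨σ, hσ, -⟩ := C.homEquiv M (𝟙 b) N' adj.counit
    have triA : adj.unit ▷ M ≫ (α_ M N' M).hom ≫ M ◁ adj.counit
        = (λ_ M).hom ≫ (ρ_ M).inv := by
      calc adj.unit ▷ M ≫ (α_ M N' M).hom ≫ M ◁ adj.counit
          = leftZigzag adj.unit adj.counit := by bicategory
        _ = (λ_ M).hom ≫ (ρ_ M).inv := adj.left_triangle
    -- candidate inverse of μ
    have hνμ : ((ρ_ (C.rhom M M)).inv ≫ C.rhom M M ◁ adj.unit ≫ (α_ (C.rhom M M) M N').inv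
        ≫ C.ev M M ▷ N' ≫ M ◁ σ) ≫ μ = 𝟙 (C.rhom M M) := by
      apply C.ev_uniq M M
      calc (((ρ_ (C.rhom M M)).inv ≫ C.rhom M M ◁ adj.unit ≫ (α_ (C.rhom M M) M N').inv
            ≫ C.ev M M ▷ N' ≫ M ◁ σ) ≫ μ) ▷ M ≫ C.ev M M
          = ((ρ_ (C.rhom M M)).inv ≫ C.rhom M M ◁ adj.unit ≫ (α_ (C.rhom M M) M N').inv
            ≫ C.ev M M ▷ N' ≫ M ◁ σ) ▷ M
            ≫ ((α_ M (C.rhom M (𝟙 b)) M).hom ≫ M ◁ C.ev M (𝟙 b) ≫ (ρ_ M).hom) := by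
            rw [comp_whiskerRight, Category.assoc, hμ]
        _ = 𝟙 _ ⊗≫ C.rhom M M ◁ adj.unit ▷ M
            ⊗≫ (C.ev M M ▷ (N' ≫ M) ≫ M ◁ (σ ▷ M ≫ C.ev M (𝟙 b))) ⊗≫ 𝟙 _ := by
            bicategory
        _ = 𝟙 _ ⊗≫ C.rhom M M ◁ adj.unit ▷ M
            ⊗≫ ((C.rhom M M ≫ M) ◁ adj.counit ≫ C.ev M M ▷ 𝟙 b) ⊗≫ 𝟙 _ := by
            rw [hσ, ← whisker_exchange]
        _ = 𝟙 _ ⊗≫ C.rhom M M ◁ (adj.unit ▷ M ≫ (α_ M N' M).hom ≫ M ◁ adj.counit)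
            ⊗≫ C.ev M M ▷ 𝟙 b ⊗≫ 𝟙 _ := by
            bicategory
        _ = 𝟙 (C.rhom M M) ▷ M ≫ C.ev M M := by
            rw [triA]; bicategory
    have hτ : (ρ_ (C.rhom M (𝟙 b))).inv ≫ C.rhom M (𝟙 b) ◁ adj.unit
        ≫ (α_ (C.rhom M (𝟙 b)) M N').inv ≫ C.ev M (𝟙 b) ▷ N' ≫ (λ_ N').hom ≫ σ
        = 𝟙 (C.rhom M (𝟙 b)) := by
      apply C.ev_uniq M (𝟙 b)
      calc ((ρ_ (C.rhom M (𝟙 b))).inv ≫ C.rhom M (𝟙 b) ◁ adj.unit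
            ≫ (α_ (C.rhom M (𝟙 b)) M N').inv ≫ C.ev M (𝟙 b) ▷ N' ≫ (λ_ N').hom ≫ σ) ▷ M
            ≫ C.ev M (𝟙 b)
          = 𝟙 _ ⊗≫ C.rhom M (𝟙 b) ◁ adj.unit ▷ M
            ⊗≫ (C.ev M (𝟙 b) ▷ (N' ≫ M) ≫ 𝟙 b ◁ (σ ▷ M ≫ C.ev M (𝟙 b))) ⊗≫ 𝟙 _ := by
            bicategory
        _ = 𝟙 _ ⊗≫ C.rhom M (𝟙 b) ◁ adj.unit ▷ M
            ⊗≫ ((C.rhom M (𝟙 b) ≫ M) ◁ adj.counit ≫ C.ev M (𝟙 b) ▷ 𝟙 b) ⊗≫ 𝟙 _ := by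
            rw [hσ, ← whisker_exchange]
        _ = 𝟙 _ ⊗≫ C.rhom M (𝟙 b) ◁ (adj.unit ▷ M ≫ (α_ M N' M).hom ≫ M ◁ adj.counit)
            ⊗≫ C.ev M (𝟙 b) ▷ 𝟙 b ⊗≫ 𝟙 _ := by
            bicategory
        _ = 𝟙 (C.rhom M (𝟙 b)) ▷ M ≫ C.ev M (𝟙 b) := by
            rw [triA]; bicategory
    have hμν : μ ≫ ((ρ_ (C.rhom M M)).inv ≫ C.rhom M M ◁ adj.unit
        ≫ (α_ (C.rhom M M) M N').inv ≫ C.ev M M ▷ N' ≫ M ◁ σ)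
        = 𝟙 (M ≫ C.rhom M (𝟙 b)) := by
      calc μ ≫ ((ρ_ (C.rhom M M)).inv ≫ C.rhom M M ◁ adj.unit
            ≫ (α_ (C.rhom M M) M N').inv ≫ C.ev M M ▷ N' ≫ M ◁ σ)
          = 𝟙 _ ⊗≫ (μ ▷ 𝟙 a ≫ C.rhom M M ◁ adj.unit) ⊗≫ C.ev M M ▷ N' ⊗≫ M ◁ σ ⊗≫ 𝟙 _ := by
            bicategory
        _ = 𝟙 _ ⊗≫ (M ≫ C.rhom M (𝟙 b)) ◁ adj.unit ⊗≫ (μ ▷ M ≫ C.ev M M) ▷ N'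
            ⊗≫ M ◁ σ ⊗≫ 𝟙 _ := by
            rw [← whisker_exchange]; bicategory
        _ = 𝟙 _ ⊗≫ (M ≫ C.rhom M (𝟙 b)) ◁ adj.unit
            ⊗≫ ((α_ M (C.rhom M (𝟙 b)) M).hom ≫ M ◁ C.ev M (𝟙 b) ≫ (ρ_ M).hom) ▷ N'
            ⊗≫ M ◁ σ ⊗≫ 𝟙 _ := by
            rw [hμ]
        _ = M ◁ ((ρ_ (C.rhom M (𝟙 b))).inv ≫ C.rhom M (𝟙 b) ◁ adj.unit
            ≫ (α_ (C.rhom M (𝟙 b)) M N').inv ≫ C.ev M (𝟙 b) ▷ N' ≫ (λ_ N').hom ≫ σ) := by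
            bicategory
        _ = 𝟙 (M ≫ C.rhom M (𝟙 b)) := by rw [hτ, Bicategory.whiskerLeft_id]
    exact ⟨_, hμν, hνμ⟩
  · intro hiso
    obtain ⟨ι, hι, -⟩ := C.homEquiv M M (𝟙 a) ((λ_ M).hom)
    have h1 : (α_ M (C.rhom M (𝟙 b)) M).hom ≫ M ◁ C.ev M (𝟙 b)
        = μ ▷ M ≫ C.ev M M ≫ (ρ_ M).inv := by
      rw [← Category.assoc, hμ]; simp
    have tri0 : (ι ≫ inv μ) ▷ M ≫ (α_ M (C.rhom M (𝟙 b)) M).hom ≫ M ◁ C.ev M (𝟙 b)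
        = (λ_ M).hom ≫ (ρ_ M).inv := by
      calc (ι ≫ inv μ) ▷ M ≫ (α_ M (C.rhom M (𝟙 b)) M).hom ≫ M ◁ C.ev M (𝟙 b)
          = (ι ≫ inv μ) ▷ M ≫ μ ▷ M ≫ C.ev M M ≫ (ρ_ M).inv := by rw [h1]
        _ = ι ▷ M ≫ C.ev M M ≫ (ρ_ M).inv := by
            rw [← Category.assoc, ← comp_whiskerRight]; simp
        _ = (λ_ M).hom ≫ (ρ_ M).inv := by rw [← Category.assoc, hι]
    have tri : leftZigzag (ι ≫ inv μ) (C.ev M (𝟙 b)) = (λ_ M).hom ≫ (ρ_ M).inv := by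
      calc leftZigzag (ι ≫ inv μ) (C.ev M (𝟙 b))
          = (ι ≫ inv μ) ▷ M ≫ (α_ M (C.rhom M (𝟙 b)) M).hom ≫ M ◁ C.ev M (𝟙 b) := by
            bicategory
        _ = (λ_ M).hom ≫ (ρ_ M).inv := tri0
    refine ⟨C.rhom M (𝟙 b), ⟨⟨ι ≫ inv μ, C.ev M (𝟙 b), tri, ?_⟩⟩⟩
    have key : (ρ_ (C.rhom M (𝟙 b))).inv ≫ C.rhom M (𝟙 b) ◁ (ι ≫ inv μ)
        ≫ (α_ (C.rhom M (𝟙 b)) M (C.rhom M (𝟙 b))).inv ≫ C.ev M (𝟙 b) ▷ C.rhom M (𝟙 b)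
        ≫ (λ_ (C.rhom M (𝟙 b))).hom = 𝟙 (C.rhom M (𝟙 b)) := by
      apply C.ev_uniq M (𝟙 b)
      calc ((ρ_ (C.rhom M (𝟙 b))).inv ≫ C.rhom M (𝟙 b) ◁ (ι ≫ inv μ)
            ≫ (α_ (C.rhom M (𝟙 b)) M (C.rhom M (𝟙 b))).inv ≫ C.ev M (𝟙 b) ▷ C.rhom M (𝟙 b)
            ≫ (λ_ (C.rhom M (𝟙 b))).hom) ▷ M ≫ C.ev M (𝟙 b)
          = 𝟙 _ ⊗≫ C.rhom M (𝟙 b) ◁ (ι ≫ inv μ) ▷ M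
            ⊗≫ (C.ev M (𝟙 b) ▷ (C.rhom M (𝟙 b) ≫ M) ≫ 𝟙 b ◁ C.ev M (𝟙 b)) ⊗≫ 𝟙 _ := by
            bicategory
        _ = 𝟙 _ ⊗≫ C.rhom M (𝟙 b) ◁ ((ι ≫ inv μ) ▷ M ≫ (α_ M (C.rhom M (𝟙 b)) M).hom
              ≫ M ◁ C.ev M (𝟙 b)) ⊗≫ C.ev M (𝟙 b) ▷ 𝟙 b ⊗≫ 𝟙 _ := by
            rw [← whisker_exchange]; bicategory
        _ = 𝟙 (C.rhom M (𝟙 b)) ▷ M ≫ C.ev M (𝟙 b) := by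
            rw [tri0]; bicategory
    calc rightZigzag (ι ≫ inv μ) (C.ev M (𝟙 b))
        = (ρ_ (C.rhom M (𝟙 b))).hom
          ≫ ((ρ_ (C.rhom M (𝟙 b))).inv ≫ C.rhom M (𝟙 b) ◁ (ι ≫ inv μ)
            ≫ (α_ (C.rhom M (𝟙 b)) M (C.rhom M (𝟙 b))).inv
            ≫ C.ev M (𝟙 b) ▷ C.rhom M (𝟙 b) ≫ (λ_ (C.rhom M (𝟙 b))).hom)
          ≫ (λ_ (C.rhom M (𝟙 b))).inv := by
          bicategory
      _ = (ρ_ (C.rhom M (𝟙 b))).hom ≫ (λ_ (C.rhom M (𝟙 b))).inv := by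
          rw [key]; simp
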